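/- Let δ = ±1 and let u : ℝ × ℝ → ℝ be a positive function, twice continuously differentiable in x and once in t, satisfying the semilinear heat equation u_t = u_xx + δ·u·ln u. Then for every a ∈ ℝ the function v(x,t) = u(x − 2a·e^{δt}, t)·exp(−δ·a·e^{δt}·x + δ·a²·e^{2δt}) is positive and again satisfies v_t = v_xx + δ·v·ln v. That is, the semilinear heat equation admits the one-parameter symmetry group generated by X₃ = 2e^{δt}∂/∂x − δe^{δt}xu∂/∂u. -/

import Mathlib

set_option maxHeartbeats 1000000

open Real


lemma heat_aux (del a : ℝ) (hdel2 : del * del = 1) (F : ℝ × ℝ → ℝ)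
    (hu : ContDiff ℝ 2 F) (hFpos : ∀ q : ℝ × ℝ, 0 < F q)
    (hheat : ∀ q : ℝ × ℝ, fderiv ℝ F q (0, 1)
        = fderiv ℝ (fun p : ℝ × ℝ => fderiv ℝ F p (1, 0)) q (1, 0)
          + del * F q * Real.log (F q))
    (V : ℝ × ℝ → ℝ)
    (hV : V = fun p : ℝ × ℝ => F (p.1 - 2 * a * Real.exp (del * p.2), p.2)
        * Real.exp (-(del * a * Real.exp (del * p.2) * p.1)
            + del * a ^ 2 * Real.exp (2 * del * p.2)))
    (x t : ℝ) :
    fderiv ℝ V (x, t) (0, 1)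
      = fderiv ℝ (fun p : ℝ × ℝ => fderiv ℝ V p (1, 0)) (x, t) (1, 0)
        + del * V (x, t) * Real.log (V (x, t)) := by
  subst hV
  have hFd : Differentiable ℝ F := hu.differentiable (by norm_num)
  have hD1 : ContDiff ℝ 1 (fderiv ℝ F) := hu.fderiv_right (by norm_num)
  have hFx_fa : ∀ q : ℝ × ℝ, HasFDerivAt (fderiv ℝ F) (fderiv ℝ (fderiv ℝ F) q) q :=
    fun q => (hD1.differentiable one_ne_zero q).hasFDerivAt
  -- basic exp derivatives
  have h1 : ∀ p : ℝ × ℝ, HasFDerivAt (fun p : ℝ × ℝ => Real.exp (del * p.2))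
      (Real.exp (del * p.2) • (del • ContinuousLinearMap.snd ℝ ℝ ℝ)) p := fun p =>
    (Real.hasDerivAt_exp (del * p.2)).comp_hasFDerivAt (h₂ := Real.exp) p ((hasFDerivAt_snd (𝕜 := ℝ) (E := ℝ) (F := ℝ)).const_mul del)
  have h2 : ∀ p : ℝ × ℝ, HasFDerivAt (fun p : ℝ × ℝ => Real.exp (2 * del * p.2))
      (Real.exp (2 * del * p.2) • ((2 * del) • ContinuousLinearMap.snd ℝ ℝ ℝ)) p := fun p =>
    (Real.hasDerivAt_exp (2 * del * p.2)).comp_hasFDerivAt (h₂ := Real.exp) p ((hasFDerivAt_snd (𝕜 := ℝ) (E := ℝ) (F := ℝ)).const_mul (2 * del))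
  -- φ
  have hφ : ∀ p : ℝ × ℝ, HasFDerivAt
      (fun p : ℝ × ℝ => ((p.1 - 2 * a * Real.exp (del * p.2), p.2) : ℝ × ℝ))
      (((ContinuousLinearMap.fst ℝ ℝ ℝ) -
        ((2 * a) • (Real.exp (del * p.2) • (del • ContinuousLinearMap.snd ℝ ℝ ℝ)))).prod
        (ContinuousLinearMap.snd ℝ ℝ ℝ)) p := fun p =>
    ((hasFDerivAt_fst).fun_sub ((h1 p).const_mul (2 * a))).prodMk (hasFDerivAt_snd)
  -- g
  have hg := fun p : ℝ × ℝ =>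
    ((((h1 p).const_mul (del * a)).fun_mul hasFDerivAt_fst).fun_neg).fun_add ((h2 p).const_mul (del * a ^ 2))
  -- E = exp ∘ g
  have hE : ∀ p : ℝ × ℝ, HasFDerivAt (fun p : ℝ × ℝ =>
      Real.exp (-(del * a * Real.exp (del * p.2) * p.1) + del * a ^ 2 * Real.exp (2 * del * p.2)))
      (Real.exp (-(del * a * Real.exp (del * p.2) * p.1) + del * a ^ 2 * Real.exp (2 * del * p.2)) •
        (-((del * a * Real.exp (del * p.2)) • ContinuousLinearMap.fst ℝ ℝ ℝ +
              p.1 • (del * a) • Real.exp (del * p.2) • del • ContinuousLinearMap.snd ℝ ℝ ℝ) +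
          (del * a ^ 2) • Real.exp (2 * del * p.2) • (2 * del) • ContinuousLinearMap.snd ℝ ℝ ℝ)) p :=
    fun p => (Real.hasDerivAt_exp
      (-(del * a * Real.exp (del * p.2) * p.1) + del * a ^ 2 * Real.exp (2 * del * p.2))).comp_hasFDerivAt (h₂ := Real.exp) p (hg p)
  -- F ∘ φ
  have hFφ : ∀ p : ℝ × ℝ, HasFDerivAt
      (fun p : ℝ × ℝ => F (p.1 - 2 * a * Real.exp (del * p.2), p.2))
      ((fderiv ℝ F (p.1 - 2 * a * Real.exp (del * p.2), p.2)).comp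
        (((ContinuousLinearMap.fst ℝ ℝ ℝ) -
          ((2 * a) • (Real.exp (del * p.2) • (del • ContinuousLinearMap.snd ℝ ℝ ℝ)))).prod
          (ContinuousLinearMap.snd ℝ ℝ ℝ))) p := fun p =>
    ((hFd _).hasFDerivAt).comp p (hφ p)
  -- V
  have hVd := fun p : ℝ × ℝ => (hFφ p).fun_mul (hE p)
  -- first x-derivative of V, everywhere
  have hVx : ∀ p : ℝ × ℝ, fderiv ℝ (fun p : ℝ × ℝ =>
        F (p.1 - 2 * a * Real.exp (del * p.2), p.2)
        * Real.exp (-(del * a * Real.exp (del * p.2) * p.1)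
            + del * a ^ 2 * Real.exp (2 * del * p.2))) p (1, 0)
      = (fderiv ℝ F (p.1 - 2 * a * Real.exp (del * p.2), p.2) (1, 0)
          + F (p.1 - 2 * a * Real.exp (del * p.2), p.2) * (-(del * a * Real.exp (del * p.2))))
        * Real.exp (-(del * a * Real.exp (del * p.2) * p.1)
            + del * a ^ 2 * Real.exp (2 * del * p.2)) := by
    intro p
    rw [(hVd p).fderiv]
    simp
    ring
  have hsplit : ∀ (q : ℝ × ℝ) (c : ℝ), fderiv ℝ F q (c, 1)
      = c * fderiv ℝ F q (1, 0) + fderiv ℝ F q (0, 1) := by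
    intro q c
    have h : ((c, 1) : ℝ × ℝ) = c • ((1:ℝ), (0:ℝ)) + ((0:ℝ), (1:ℝ)) := by
      simp [Prod.ext_iff]
    rw [h, map_add, map_smul, smul_eq_mul]
  have hVt : fderiv ℝ (fun p : ℝ × ℝ =>
        F (p.1 - 2 * a * Real.exp (del * p.2), p.2)
        * Real.exp (-(del * a * Real.exp (del * p.2) * p.1)
            + del * a ^ 2 * Real.exp (2 * del * p.2))) (x, t) (0, 1)
      = F (x - 2 * a * Real.exp (del * t), t)
          * Real.exp (-(del * a * Real.exp (del * t) * x) + del * a ^ 2 * Real.exp (2 * del * t))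
          * (-(del * a * Real.exp (del * t) * del * x) + del * a ^ 2 * (2 * del) * Real.exp (2 * del * t))
        + Real.exp (-(del * a * Real.exp (del * t) * x) + del * a ^ 2 * Real.exp (2 * del * t))
          * (-(2 * a * (Real.exp (del * t) * del)) * fderiv ℝ F (x - 2 * a * Real.exp (del * t), t) (1, 0)
             + fderiv ℝ F (x - 2 * a * Real.exp (del * t), t) (0, 1)) := by
    rw [(hVd (x, t)).fderiv]
    simp
    rw [hsplit]
    ring
  -- second derivative via hVx
  have hWeq : (fun p : ℝ × ℝ => fderiv ℝ (fun p : ℝ × ℝ =>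
        F (p.1 - 2 * a * Real.exp (del * p.2), p.2)
        * Real.exp (-(del * a * Real.exp (del * p.2) * p.1)
            + del * a ^ 2 * Real.exp (2 * del * p.2))) p (1, 0))
      = fun p : ℝ × ℝ =>
        (fderiv ℝ F (p.1 - 2 * a * Real.exp (del * p.2), p.2) (1, 0)
          + F (p.1 - 2 * a * Real.exp (del * p.2), p.2) * (-(del * a * Real.exp (del * p.2))))
        * Real.exp (-(del * a * Real.exp (del * p.2) * p.1)
            + del * a ^ 2 * Real.exp (2 * del * p.2)) := funext hVx
  rw [hWeq]
  have hFx1 : ∀ q : ℝ × ℝ, HasFDerivAt (fun q : ℝ × ℝ => fderiv ℝ F q ((1:ℝ),(0:ℝ)))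
      ((fderiv ℝ (fderiv ℝ F) q).flip ((1:ℝ),(0:ℝ))) q := by
    intro q
    have := (hFx_fa q).clm_apply (hasFDerivAt_const (((1:ℝ),(0:ℝ)) : ℝ × ℝ) q)
    simpa using this
  have hFxφ : ∀ p : ℝ × ℝ, HasFDerivAt
      (fun p : ℝ × ℝ => fderiv ℝ F (p.1 - 2 * a * Real.exp (del * p.2), p.2) ((1:ℝ),(0:ℝ)))
      (((fderiv ℝ (fderiv ℝ F) (p.1 - 2 * a * Real.exp (del * p.2), p.2)).flip ((1:ℝ),(0:ℝ))).comp
        (((ContinuousLinearMap.fst ℝ ℝ ℝ) -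
          ((2 * a) • (Real.exp (del * p.2) • (del • ContinuousLinearMap.snd ℝ ℝ ℝ)))).prod
          (ContinuousLinearMap.snd ℝ ℝ ℝ))) p := fun p =>
    (hFx1 _).comp p (hφ p)
  have hc : ∀ p : ℝ × ℝ, HasFDerivAt (fun p : ℝ × ℝ => -(del * a * Real.exp (del * p.2)))
      (-((del * a) • (Real.exp (del * p.2) • (del • ContinuousLinearMap.snd ℝ ℝ ℝ)))) p :=
    fun p => ((h1 p).const_mul (del * a)).neg
  have hW := (((hFxφ (x,t)).fun_add ((hFφ (x,t)).fun_mul (hc (x,t)))).fun_mul (hE (x,t)))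
  have hWx : fderiv ℝ (fun p : ℝ × ℝ =>
        (fderiv ℝ F (p.1 - 2 * a * Real.exp (del * p.2), p.2) (1, 0)
          + F (p.1 - 2 * a * Real.exp (del * p.2), p.2) * (-(del * a * Real.exp (del * p.2))))
        * Real.exp (-(del * a * Real.exp (del * p.2) * p.1)
            + del * a ^ 2 * Real.exp (2 * del * p.2))) (x, t) (1, 0)
      = (fderiv ℝ (fderiv ℝ F) (x - 2 * a * Real.exp (del * t), t) ((1:ℝ),(0:ℝ))) ((1:ℝ),(0:ℝ))
          * Real.exp (-(del * a * Real.exp (del * t) * x) + del * a ^ 2 * Real.exp (2 * del * t))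
        - 2 * del * a * Real.exp (del * t)
          * fderiv ℝ F (x - 2 * a * Real.exp (del * t), t) (1, 0)
          * Real.exp (-(del * a * Real.exp (del * t) * x) + del * a ^ 2 * Real.exp (2 * del * t))
        + del * del * a * a * Real.exp (del * t) * Real.exp (del * t)
          * F (x - 2 * a * Real.exp (del * t), t)
          * Real.exp (-(del * a * Real.exp (del * t) * x) + del * a ^ 2 * Real.exp (2 * del * t)) := by
    rw [hW.fderiv]
    simp
    ring
  rw [hVt, hWx]
  have hFxx : ∀ q : ℝ × ℝ, fderiv ℝ (fun p : ℝ × ℝ => fderiv ℝ F p ((1:ℝ),(0:ℝ))) q ((1:ℝ),(0:ℝ))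
      = (fderiv ℝ (fderiv ℝ F) q ((1:ℝ),(0:ℝ))) ((1:ℝ),(0:ℝ)) := by
    intro q
    rw [(hFx1 q).fderiv]
    simp
  have hheat' : ∀ q : ℝ × ℝ, fderiv ℝ F q ((0:ℝ),(1:ℝ))
      = (fderiv ℝ (fderiv ℝ F) q ((1:ℝ),(0:ℝ))) ((1:ℝ),(0:ℝ)) + del * F q * Real.log (F q) := by
    intro q
    rw [hheat q, hFxx q]
  rw [hheat']
  rw [Real.log_mul (ne_of_gt (hFpos _)) (Real.exp_ne_zero _), Real.log_exp]
  have hexp : Real.exp (del * t) * Real.exp (del * t) = Real.exp (2 * del * t) := by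
    rw [← Real.exp_add]; ring_nf
  linear_combination (-(del * del) * a ^ 2
    * F (x - 2 * a * Real.exp (del * t), t)
    * Real.exp (-(del * a * Real.exp (del * t) * x) + del * a ^ 2 * Real.exp (2 * del * t))) * hexp


/-- The semilinear heat equation `u_t = u_xx + δ u ln u` (δ = ±1, u > 0) admits
the one-parameter symmetry group generated by `X₃ = 2e^{δt}∂/∂x − δe^{δt}xu∂/∂u`:
if `u` solves the equation then so does
`v(x,t) = u(x − 2a e^{δt}, t)·exp(−δ a e^{δt} x + δ a² e^{2δt})`, and `v` is
positive. Partial derivatives are `fderiv` of the uncurried functions. -/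
theorem semilinear_heat_X3_symmetry
    (del : ℝ) (hdel : del = 1 ∨ del = -1)
    (u : ℝ → ℝ → ℝ) (hu : ContDiff ℝ 2 (fun p : ℝ × ℝ => u p.1 p.2))
    (hpos : ∀ x t, 0 < u x t)
    (hheat : ∀ x t : ℝ,
      fderiv ℝ (fun p : ℝ × ℝ => u p.1 p.2) (x, t) (0, 1)
        = fderiv ℝ (fun p : ℝ × ℝ =>
            fderiv ℝ (fun q : ℝ × ℝ => u q.1 q.2) p (1, 0)) (x, t) (1, 0)
          + del * u x t * Real.log (u x t))
    (a : ℝ)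
    (v : ℝ → ℝ → ℝ)
    (hv : ∀ x t, v x t = u (x - 2 * a * Real.exp (del * t)) t
        * Real.exp (-(del * a * Real.exp (del * t) * x)
            + del * a ^ 2 * Real.exp (2 * del * t))) :
    ∀ x t : ℝ,
      0 < v x t ∧
      fderiv ℝ (fun p : ℝ × ℝ => v p.1 p.2) (x, t) (0, 1)
        = fderiv ℝ (fun p : ℝ × ℝ =>
            fderiv ℝ (fun q : ℝ × ℝ => v q.1 q.2) p (1, 0)) (x, t) (1, 0)
          + del * v x t * Real.log (v x t) := by
  intro x t
  constructor
  · rw [hv]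
    exact mul_pos (hpos _ _) (Real.exp_pos _)
  · have hdel2 : del * del = 1 := by
      rcases hdel with h | h <;> rw [h] <;> norm_num
    exact heat_aux del a hdel2 (fun p : ℝ × ℝ => u p.1 p.2) hu
      (fun q => hpos q.1 q.2) (fun q => hheat q.1 q.2)
      (fun p : ℝ × ℝ => v p.1 p.2) (funext fun p => hv p.1 p.2) x t
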